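/- For integers n, m ≥ 5, the mutual-visibility number of the direct product K_n × K_m is at most nm − 4. -/

import Mathlib

namespace MutualVisibility

open SimpleGraph

variable {V W : Type*}

/-- `x` and `y` are `X`-visible in `G`: there is a shortest `x,y`-path all of whose
internal vertices avoid `X`. -/
def Visible (G : SimpleGraph V) (X : Set V) (x y : V) : Prop :=
  ∃ p : G.Walk x y, p.length = G.dist x y ∧ ∀ v ∈ p.support, v ≠ x → v ≠ y → v ∉ X

/-- `X` is a mutual-visibility set: any two vertices of `X` are `X`-visible. -/
def IsMutualVisSet (G : SimpleGraph V) (X : Set V) : Prop :=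
  ∀ x ∈ X, ∀ y ∈ X, Visible G X x y

/-- outer mutual-visibility set -/
def IsOuterMutualVisSet (G : SimpleGraph V) (X : Set V) : Prop :=
  IsMutualVisSet G X ∧ ∀ x ∈ X, ∀ y ∉ X, Visible G X x y

/-- dual mutual-visibility set -/
def IsDualMutualVisSet (G : SimpleGraph V) (X : Set V) : Prop :=
  IsMutualVisSet G X ∧ ∀ x ∉ X, ∀ y ∉ X, Visible G X x y

/-- total mutual-visibility set -/
def IsTotalMutualVisSet (G : SimpleGraph V) (X : Set V) : Prop :=
  ∀ x y : V, Visible G X x y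

/-- mutual-visibility number μ(G) -/
noncomputable def mu (G : SimpleGraph V) : ℕ :=
  sSup {k | ∃ X : Set V, IsMutualVisSet G X ∧ X.ncard = k}

/-- outer mutual-visibility number μ_o(G) -/
noncomputable def muOuter (G : SimpleGraph V) : ℕ :=
  sSup {k | ∃ X : Set V, IsOuterMutualVisSet G X ∧ X.ncard = k}

/-- dual mutual-visibility number μ_d(G) -/
noncomputable def muDual (G : SimpleGraph V) : ℕ :=
  sSup {k | ∃ X : Set V, IsDualMutualVisSet G X ∧ X.ncard = k}

/-- total mutual-visibility number μ_t(G) -/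
noncomputable def muTotal (G : SimpleGraph V) : ℕ :=
  sSup {k | ∃ X : Set V, IsTotalMutualVisSet G X ∧ X.ncard = k}

/-- `H` contains a subgraph copy of `F`. -/
def ContainsCopy (F : SimpleGraph W) (H : SimpleGraph V) : Prop :=
  ∃ f : W → V, Function.Injective f ∧ ∀ a b, F.Adj a b → H.Adj (f a) (f b)

/-- The Turán number ex(n; F): max number of edges of an `n`-vertex graph with no copy of `F`. -/
noncomputable def exNum (n : ℕ) (F : SimpleGraph W) : ℕ :=
  sSup {k | ∃ H : SimpleGraph (Fin n), ¬ ContainsCopy F H ∧ H.edgeSet.ncard = k}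

/-- The direct (tensor/categorical) product of graphs. -/
def directProd (G : SimpleGraph V) (H : SimpleGraph W) : SimpleGraph (V × W) where
  Adj x y := G.Adj x.1 y.1 ∧ H.Adj x.2 y.2
  symm := ⟨fun _ _ ⟨h1, h2⟩ => ⟨G.adj_symm h1, H.adj_symm h2⟩⟩
  loopless := ⟨fun x h => G.loopless.irrefl x.1 h.1⟩

/-- The join `G + H` of two graphs. -/
def graphJoin (G : SimpleGraph V) (H : SimpleGraph W) : SimpleGraph (V ⊕ W) where
  Adj u v := match u, v with
    | Sum.inl a, Sum.inl b => G.Adj a b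
    | Sum.inr a, Sum.inr b => H.Adj a b
    | _, _ => True
  symm := ⟨fun u v => match u, v with
    | Sum.inl _, Sum.inl _ => fun h => G.adj_symm h
    | Sum.inr _, Sum.inr _ => fun h => H.adj_symm h
    | Sum.inl _, Sum.inr _ => fun _ => trivial
    | Sum.inr _, Sum.inl _ => fun _ => trivial⟩
  loopless := ⟨fun u => match u with
    | Sum.inl a => G.loopless.irrefl a
    | Sum.inr a => H.loopless.irrefl a⟩

/-- A big-μ graph: `G = (K_1 ∪ K_t) + H` for some `t ≥ 0` and some graph `H`. -/
def IsBigMu {V : Type} (G : SimpleGraph V) : Prop :=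
  ∃ (t : ℕ) (W : Type) (H : SimpleGraph W),
    Nonempty (G ≃g graphJoin ((⊤ : SimpleGraph (Fin 1)) ⊕g (⊤ : SimpleGraph (Fin t))) H)

/-- A cograph: a graph with no induced path on four vertices. -/
def IsCograph (G : SimpleGraph V) : Prop :=
  ¬ ∃ f : Fin 4 → V, Function.Injective f ∧
      ∀ a b, (pathGraph 4).Adj a b ↔ G.Adj (f a) (f b)

/-- The Petersen graph, realized as the Kneser graph K(5,2). -/
def petersen : SimpleGraph {s : Finset (Fin 5) // s.card = 2} where
  Adj a b := Disjoint a.1 b.1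
  symm := ⟨fun _ _ h => Disjoint.symm h⟩
  loopless := by
    constructor
    rintro ⟨s, hs⟩ (h : Disjoint s s)
    rw [disjoint_self, Finset.bot_eq_empty] at h
    subst h
    simp at hs


lemma exists_ne3 {n : ℕ} (hn : 4 ≤ n) (x y z : Fin n) :
    ∃ w : Fin n, w ≠ x ∧ w ≠ y ∧ w ≠ z := by
  by_contra h
  push_neg at h
  have hsub : (Finset.univ : Finset (Fin n)) ⊆ {x, y, z} := by
    intro w _
    simp only [Finset.mem_insert, Finset.mem_singleton]
    by_contra hw
    push_neg at hw
    exact hw.2.2 (h w hw.1 hw.2.1)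
  have h1 := Finset.card_le_card hsub
  have h2 : ({x, y, z} : Finset (Fin n)).card ≤ 3 := by
    apply le_trans (Finset.card_insert_le _ _)
    have h3 : ({y, z} : Finset (Fin n)).card ≤ 2 := by
      apply le_trans (Finset.card_insert_le _ _)
      simp
    omega
  simp only [Finset.card_univ, Fintype.card_fin] at h1
  omega

lemma two_cover {m : ℕ} (hm : 4 ≤ m) (x y z : Fin m) (h : x = y ∨ x = z ∨ y = z) :
    ∃ j j' : Fin m, j ≠ j' ∧ (x = j ∨ x = j') ∧ (y = j ∨ y = j') ∧ (z = j ∨ z = j') := by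
  have key : ∀ u v : Fin m, ∃ j j' : Fin m, j ≠ j' ∧ (u = j ∨ u = j') ∧ (v = j ∨ v = j') := by
    intro u v
    by_cases huv : u = v
    · obtain ⟨w, hw, -, -⟩ := exists_ne3 hm u u u
      exact ⟨u, w, fun h => hw h.symm, Or.inl rfl, Or.inl huv.symm⟩
    · exact ⟨u, v, huv, Or.inl rfl, Or.inr rfl⟩
  rcases h with h | h | h
  · obtain ⟨j, j', h1, h2, h3⟩ := key x z
    exact ⟨j, j', h1, h2, h ▸ h2, h3⟩
  · obtain ⟨j, j', h1, h2, h3⟩ := key x y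
    exact ⟨j, j', h1, h2, h3, h ▸ h2⟩
  · obtain ⟨j, j', h1, h2, h3⟩ := key x y
    exact ⟨j, j', h1, h2, h3, h ▸ h3⟩

lemma subset_three {α : Type*} [Fintype α] [Nonempty α] {s : Set α} (h : s.ncard ≤ 3) :
    ∃ a b c : α, s ⊆ {a, b, c} := by
  obtain h0 | h1 | h2 | h3 : s.ncard = 0 ∨ s.ncard = 1 ∨ s.ncard = 2 ∨ s.ncard = 3 := by omega
  · obtain ⟨a⟩ := (inferInstance : Nonempty α)
    have hs : s = ∅ := (Set.ncard_eq_zero).mp h0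
    exact ⟨a, a, a, by simp [hs]⟩
  · obtain ⟨a, rfl⟩ := Set.ncard_eq_one.mp h1
    exact ⟨a, a, a, by intro x hx; simp at hx ⊢; tauto⟩
  · obtain ⟨a, b, -, rfl⟩ := Set.ncard_eq_two.mp h2
    exact ⟨a, a, b, by intro x hx; simp at hx ⊢; tauto⟩
  · obtain ⟨a, b, c, -, -, -, rfl⟩ := Set.ncard_eq_three.mp h3
    exact ⟨a, b, c, subset_rfl⟩

lemma dp_adj {n m : ℕ} {x y : Fin n × Fin m} :
    (directProd (⊤ : SimpleGraph (Fin n)) (⊤ : SimpleGraph (Fin m))).Adj x y ↔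
      x.1 ≠ y.1 ∧ x.2 ≠ y.2 := Iff.rfl

lemma cover_lemma {n m : ℕ} (hn : 5 ≤ n) (hm : 5 ≤ m) (a b c : Fin n × Fin m) :
    (∃ (i : Fin n) (j j' : Fin m), j ≠ j' ∧
      ((i, j) ≠ a ∧ (i, j) ≠ b ∧ (i, j) ≠ c) ∧
      ((i, j') ≠ a ∧ (i, j') ≠ b ∧ (i, j') ≠ c) ∧
      (a.1 = i ∨ a.2 = j ∨ a.2 = j') ∧
      (b.1 = i ∨ b.2 = j ∨ b.2 = j') ∧
      (c.1 = i ∨ c.2 = j ∨ c.2 = j')) ∨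
    (∃ (j : Fin m) (i i' : Fin n), i ≠ i' ∧
      ((i, j) ≠ a ∧ (i, j) ≠ b ∧ (i, j) ≠ c) ∧
      ((i', j) ≠ a ∧ (i', j) ≠ b ∧ (i', j) ≠ c) ∧
      (a.2 = j ∨ a.1 = i ∨ a.1 = i') ∧
      (b.2 = j ∨ b.1 = i ∨ b.1 = i') ∧
      (c.2 = j ∨ c.1 = i ∨ c.1 = i')) := by
  by_cases hcols : a.2 = b.2 ∨ a.2 = c.2 ∨ b.2 = c.2
  · left
    obtain ⟨i, hia, hib, hic⟩ := exists_ne3 (by omega) a.1 b.1 c.1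
    obtain ⟨j, j', hjj, hax, hbx, hcx⟩ := two_cover (by omega) a.2 b.2 c.2 hcols
    refine ⟨i, j, j', hjj, ⟨?_, ?_, ?_⟩, ⟨?_, ?_, ?_⟩, Or.inr hax, Or.inr hbx, Or.inr hcx⟩ <;>
      simp_all [Prod.ext_iff]
  · push_neg at hcols
    obtain ⟨hab2, hac2, hbc2⟩ := hcols
    have hba2 : b.2 ≠ a.2 := fun h => hab2 h.symm
    have hca2 : c.2 ≠ a.2 := fun h => hac2 h.symm
    have hcb2 : c.2 ≠ b.2 := fun h => hbc2 h.symm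
    by_cases hall : a.1 = b.1 ∧ a.1 = c.1
    · right
      obtain ⟨j, hja, hjb, hjc⟩ := exists_ne3 (by omega) a.2 b.2 c.2
      obtain ⟨i', hi'a, -, -⟩ := exists_ne3 (by omega) a.1 a.1 a.1
      refine ⟨j, a.1, i', Ne.symm hi'a, ⟨?_, ?_, ?_⟩, ⟨?_, ?_, ?_⟩,
        Or.inr (Or.inl rfl), Or.inr (Or.inl hall.1.symm), Or.inr (Or.inl hall.2.symm)⟩ <;>
        simp_all [Prod.ext_iff]
    · left
      by_cases h1 : a.1 ≠ b.1 ∧ a.1 ≠ c.1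
      · refine ⟨a.1, b.2, c.2, hbc2, ⟨?_, ?_, ?_⟩, ⟨?_, ?_, ?_⟩,
          Or.inl rfl, Or.inr (Or.inl rfl), Or.inr (Or.inr rfl)⟩ <;>
          simp_all [Prod.ext_iff]
      · by_cases h2 : b.1 ≠ a.1 ∧ b.1 ≠ c.1
        · refine ⟨b.1, a.2, c.2, hac2, ⟨?_, ?_, ?_⟩, ⟨?_, ?_, ?_⟩,
            Or.inr (Or.inl rfl), Or.inl rfl, Or.inr (Or.inr rfl)⟩ <;>
            simp_all [Prod.ext_iff]
        · push_neg at h1 h2 hall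
          have hab : a.1 = b.1 := by
            by_contra hne
            exact hne ((h1 hne).trans (h2 (Ne.symm hne)).symm)
          have hac : a.1 ≠ c.1 := hall hab
          have hbc : b.1 ≠ c.1 := hab ▸ hac
          refine ⟨c.1, a.2, b.2, hab2, ⟨?_, ?_, ?_⟩, ⟨?_, ?_, ?_⟩,
            Or.inr (Or.inl rfl), Or.inr (Or.inr rfl), Or.inl rfl⟩ <;>
            simp_all [Prod.ext_iff]
          all_goals tauto

lemma visible_mid {n m : ℕ} (hn : 5 ≤ n) (hm : 5 ≤ m) {X : Set (Fin n × Fin m)}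
    {x y : Fin n × Fin m} (hxy : x ≠ y)
    (hna : ¬ (directProd (⊤ : SimpleGraph (Fin n)) (⊤ : SimpleGraph (Fin m))).Adj x y)
    (h : Visible (directProd (⊤ : SimpleGraph (Fin n)) (⊤ : SimpleGraph (Fin m))) X x y) :
    ∃ v, v ∉ X ∧ v.1 ≠ x.1 ∧ v.2 ≠ x.2 ∧ v.1 ≠ y.1 ∧ v.2 ≠ y.2 := by
  obtain ⟨p, hlen, hint⟩ := h
  obtain ⟨i0, hi1, hi2, -⟩ := exists_ne3 (by omega) x.1 y.1 y.1
  obtain ⟨j0, hj1, hj2, -⟩ := exists_ne3 (by omega) x.2 y.2 y.2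
  have hadj1 : (directProd (⊤ : SimpleGraph (Fin n)) (⊤ : SimpleGraph (Fin m))).Adj x (i0, j0) :=
    dp_adj.mpr ⟨Ne.symm hi1, Ne.symm hj1⟩
  have hadj2 : (directProd (⊤ : SimpleGraph (Fin n)) (⊤ : SimpleGraph (Fin m))).Adj (i0, j0) y :=
    dp_adj.mpr ⟨hi2, hj2⟩
  have hd : (directProd (⊤ : SimpleGraph (Fin n)) (⊤ : SimpleGraph (Fin m))).dist x y ≤ 2 := by
    have := SimpleGraph.dist_le
      (SimpleGraph.Walk.cons hadj1 (SimpleGraph.Walk.cons hadj2 SimpleGraph.Walk.nil))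
    simpa using this
  have hplen : p.length ≤ 2 := hlen ▸ hd
  cases p with
  | nil => exact absurd rfl hxy
  | cons h1 q =>
    rename_i v
    cases q with
    | nil => exact absurd h1 hna
    | cons h2 q2 =>
      have hq2 : q2.length = 0 := by
        simp only [SimpleGraph.Walk.length_cons] at hplen
        omega
      have heq := q2.eq_of_length_eq_zero hq2
      subst heq
      rw [dp_adj] at h1 h2
      refine ⟨v, hint v (by simp) (fun hvx => h1.1 (by rw [hvx])) (fun hvy => h2.1 (by rw [hvy])),
        Ne.symm h1.1, Ne.symm h1.2, h2.1, h2.2⟩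

lemma compl_card {n m : ℕ} (hn : 5 ≤ n) (hm : 5 ≤ m) {X : Set (Fin n × Fin m)}
    (hX : IsMutualVisSet (directProd (⊤ : SimpleGraph (Fin n)) (⊤ : SimpleGraph (Fin m))) X) :
    4 ≤ Xᶜ.ncard := by
  have : Nonempty (Fin n) := ⟨⟨0, by omega⟩⟩
  have : Nonempty (Fin m) := ⟨⟨0, by omega⟩⟩
  by_contra hlt
  push_neg at hlt
  obtain ⟨a, b, c, hsub⟩ := subset_three (s := Xᶜ) (by omega)
  have hmem : ∀ v : Fin n × Fin m, v ∉ X → v = a ∨ v = b ∨ v = c := by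
    intro v hv
    have := hsub hv
    simpa using this
  rcases cover_lemma hn hm a b c with
    ⟨i, j, j', hjj, ⟨h1a, h1b, h1c⟩, ⟨h2a, h2b, h2c⟩, hca, hcb, hcc⟩ |
    ⟨j, i, i', hii, ⟨h1a, h1b, h1c⟩, ⟨h2a, h2b, h2c⟩, hca, hcb, hcc⟩
  · have hx : ((i, j) : Fin n × Fin m) ∈ X := by
      by_contra hx
      rcases hmem _ hx with h | h | h
      exacts [h1a h, h1b h, h1c h]
    have hy : ((i, j') : Fin n × Fin m) ∈ X := by
      by_contra hy
      rcases hmem _ hy with h | h | h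
      exacts [h2a h, h2b h, h2c h]
    have hne : ((i, j) : Fin n × Fin m) ≠ (i, j') := fun h => hjj (congrArg Prod.snd h)
    have hna : ¬ (directProd (⊤ : SimpleGraph (Fin n)) (⊤ : SimpleGraph (Fin m))).Adj
        (i, j) (i, j') := by
      rw [dp_adj]
      simp
    obtain ⟨v, hvX, hv1, hv2, hv3, hv4⟩ := visible_mid hn hm hne hna (hX _ hx _ hy)
    rcases hmem v hvX with rfl | rfl | rfl
    · rcases hca with h | h | h
      exacts [hv1 h, hv2 h, hv4 h]
    · rcases hcb with h | h | h
      exacts [hv1 h, hv2 h, hv4 h]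
    · rcases hcc with h | h | h
      exacts [hv1 h, hv2 h, hv4 h]
  · have hx : ((i, j) : Fin n × Fin m) ∈ X := by
      by_contra hx
      rcases hmem _ hx with h | h | h
      exacts [h1a h, h1b h, h1c h]
    have hy : ((i', j) : Fin n × Fin m) ∈ X := by
      by_contra hy
      rcases hmem _ hy with h | h | h
      exacts [h2a h, h2b h, h2c h]
    have hne : ((i, j) : Fin n × Fin m) ≠ (i', j) := fun h => hii (congrArg Prod.fst h)
    have hna : ¬ (directProd (⊤ : SimpleGraph (Fin n)) (⊤ : SimpleGraph (Fin m))).Adj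
        (i, j) (i', j) := by
      rw [dp_adj]
      simp
    obtain ⟨v, hvX, hv1, hv2, hv3, hv4⟩ := visible_mid hn hm hne hna (hX _ hx _ hy)
    rcases hmem v hvX with rfl | rfl | rfl
    · rcases hca with h | h | h
      exacts [hv2 h, hv1 h, hv3 h]
    · rcases hcb with h | h | h
      exacts [hv2 h, hv1 h, hv3 h]
    · rcases hcc with h | h | h
      exacts [hv2 h, hv1 h, hv3 h]


theorem mu_directProd_complete_le (n m : ℕ) (hn : 5 ≤ n) (hm : 5 ≤ m) :
    mu (directProd (⊤ : SimpleGraph (Fin n)) (⊤ : SimpleGraph (Fin m))) ≤ n * m - 4 := by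
  apply csSup_le'
  rintro k ⟨X, hX, rfl⟩
  have h4 := compl_card hn hm hX
  have hsum : X.ncard + Xᶜ.ncard = n * m := by
    have h := Set.ncard_add_ncard_compl X
    simpa [Nat.card_eq_fintype_card] using h
  omega
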